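/- For a continuous t-norm * on [0,1] with residuum →, there exists a morphism φ: {p} ⇸ {q} of one-element [0,1]_*-sets if and only if p = q, or p < q and p is idempotent; and in that case necessarily φ(p,q) = p. -/

import Mathlib

open Set Filter Topology

theorem stmt10
    (m : ℝ → ℝ → ℝ)
    (hmem : ∀ x ∈ Set.Icc (0:ℝ) 1, ∀ y ∈ Set.Icc (0:ℝ) 1, m x y ∈ Set.Icc (0:ℝ) 1)
    (hcomm : ∀ x ∈ Set.Icc (0:ℝ) 1, ∀ y ∈ Set.Icc (0:ℝ) 1, m x y = m y x)
    (hassoc : ∀ x ∈ Set.Icc (0:ℝ) 1, ∀ y ∈ Set.Icc (0:ℝ) 1, ∀ z ∈ Set.Icc (0:ℝ) 1, m (m x y) z = m x (m y z))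
    (hunit : ∀ x ∈ Set.Icc (0:ℝ) 1, m x 1 = x)
    (hmono : ∀ x ∈ Set.Icc (0:ℝ) 1, ∀ x' ∈ Set.Icc (0:ℝ) 1, ∀ y ∈ Set.Icc (0:ℝ) 1, ∀ y' ∈ Set.Icc (0:ℝ) 1, x ≤ x' → y ≤ y' → m x y ≤ m x' y')
    (hcont : ContinuousOn (fun p : ℝ × ℝ => m p.1 p.2) (Set.Icc (0:ℝ) 1 ×ˢ Set.Icc (0:ℝ) 1))
    (rr : ℝ → ℝ → ℝ)
    (hrmem : ∀ p ∈ Set.Icc (0:ℝ) 1, ∀ s ∈ Set.Icc (0:ℝ) 1, rr p s ∈ Set.Icc (0:ℝ) 1)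
    (hadj : ∀ p ∈ Set.Icc (0:ℝ) 1, ∀ q ∈ Set.Icc (0:ℝ) 1, ∀ s ∈ Set.Icc (0:ℝ) 1, (m p q ≤ s ↔ q ≤ rr p s))
    (p q : ℝ) (hp : p ∈ Set.Icc (0:ℝ) 1) (hq : q ∈ Set.Icc (0:ℝ) 1) :
    ((∃ u ∈ Set.Icc (0:ℝ) 1, u ≤ min p q ∧
        m (m (rr q q) u) (rr p p) ≤ u ∧
        m u (rr p u) ≤ q ∧
        p ≤ m u (rr q u)) ↔ (p = q ∨ (p < q ∧ m p p = p))) ∧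
    (∀ u ∈ Set.Icc (0:ℝ) 1, (u ≤ min p q ∧
        m (m (rr q q) u) (rr p p) ≤ u ∧
        m u (rr p u) ≤ q ∧
        p ≤ m u (rr q u)) → u = p) := by
  have h0 : (0:ℝ) ∈ Set.Icc (0:ℝ) 1 := ⟨le_refl 0, zero_le_one⟩
  have h1 : (1:ℝ) ∈ Set.Icc (0:ℝ) 1 := ⟨zero_le_one, le_refl 1⟩
  -- m x y ≤ x and m x y ≤ y
  have hle_left : ∀ x ∈ Set.Icc (0:ℝ) 1, ∀ y ∈ Set.Icc (0:ℝ) 1, m x y ≤ x := by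
    intro x hx y hy
    have := hmono x hx x hx y hy 1 h1 le_rfl hy.2
    rwa [hunit x hx] at this
  have hle_right : ∀ x ∈ Set.Icc (0:ℝ) 1, ∀ y ∈ Set.Icc (0:ℝ) 1, m x y ≤ y := by
    intro x hx y hy
    rw [hcomm x hx y hy]; exact hle_left y hy x hx
  -- residuation basics
  have hres : ∀ a ∈ Set.Icc (0:ℝ) 1, ∀ b ∈ Set.Icc (0:ℝ) 1, m a (rr a b) ≤ b := by
    intro a ha b hb
    exact (hadj a ha (rr a b) (hrmem a ha b hb) b hb).mpr le_rfl
  have hler : ∀ a ∈ Set.Icc (0:ℝ) 1, ∀ b ∈ Set.Icc (0:ℝ) 1, b ≤ rr a b := by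
    intro a ha b hb
    exact (hadj a ha b hb b hb).mp (hle_right a ha b hb)
  -- key uniqueness: any u with the properties equals p
  have key : ∀ u ∈ Set.Icc (0:ℝ) 1, (u ≤ min p q ∧
        m (m (rr q q) u) (rr p p) ≤ u ∧
        m u (rr p u) ≤ q ∧
        p ≤ m u (rr q u)) → u = p := by
    intro u hu ⟨hmin, _, _, h4⟩
    have hup : u ≤ p := le_trans hmin (min_le_left p q)
    have h' : m u (rr q u) ≤ u := hle_left u hu (rr q u) (hrmem q hq u hu)
    exact le_antisymm hup (le_trans h4 h')
  refine ⟨⟨?_, ?_⟩, key⟩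
  · -- forward direction
    rintro ⟨u, hu, hmin, h2, h3, h4⟩
    have hupeq : u = p := key u hu ⟨hmin, h2, h3, h4⟩
    subst hupeq
    have hpq : u ≤ q := le_trans hmin (min_le_right u q)
    rcases eq_or_lt_of_le hpq with heq | hlt
    · exact Or.inl heq
    refine Or.inr ⟨hlt, ?_⟩
    -- now u < q; show m u u = u
    set r := rr q u with hrdef
    have hr : r ∈ Set.Icc (0:ℝ) 1 := hrmem q hq u hu
    have hmur : m u r = u := by
      refine le_antisymm (hle_left u hu r hr) h4
    -- by IVT, m q r = u
    have hcontq : ContinuousOn (fun t => m q t) (Set.Icc (0:ℝ) 1) := by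
      have hmapsto : Set.MapsTo (fun t : ℝ => ((q:ℝ), t)) (Set.Icc (0:ℝ) 1)
          (Set.Icc (0:ℝ) 1 ×ˢ Set.Icc (0:ℝ) 1) := fun t ht => Set.mk_mem_prod hq ht
      exact hcont.comp (continuousOn_const.prodMk continuousOn_id) hmapsto
    have hq0 : m q 0 = 0 :=
      le_antisymm (hle_right q hq 0 h0) (hmem q hq 0 h0).1
    have hq1 : m q 1 = q := hunit q hq
    have hmqr : m q r = u := by
      have hiv : Set.Icc (m q 0) (m q 1) ⊆ (fun t => m q t) '' Set.Icc (0:ℝ) 1 :=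
        intermediate_value_Icc zero_le_one hcontq
      have hu' : u ∈ Set.Icc (m q 0) (m q 1) := by
        rw [hq0, hq1]; exact ⟨hu.1, hpq⟩
      obtain ⟨t, ht, hmt⟩ := hiv hu'
      have hmt' : m q t = u := hmt
      have htr : t ≤ r := (hadj q hq t ht u hu).mp (le_of_eq hmt')
      have h1' : u ≤ m q r := by
        calc u = m q t := hmt'.symm
          _ ≤ m q r := hmono q hq q hq t ht r hr le_rfl htr
      exact le_antisymm (hres q hq u hu) h1'
    -- powers of r
    set pw : ℕ → ℝ := fun n => Nat.rec r (fun _ x => m x r) n with hpw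
    have hpw0 : pw 0 = r := rfl
    have hpwsucc : ∀ n, pw (n+1) = m (pw n) r := fun n => rfl
    have hpwmem : ∀ n, pw n ∈ Set.Icc (0:ℝ) 1 := by
      intro n; induction n with
      | zero => exact hr
      | succ n ih => rw [hpwsucc]; exact hmem _ ih r hr
    have hpwanti : Antitone pw := by
      apply antitone_nat_of_succ_le
      intro n
      rw [hpwsucc]
      exact hle_left (pw n) (hpwmem n) r hr
    have hmu_pw : ∀ n, m u (pw n) = u := by
      intro n; induction n with
      | zero => exact hmur
      | succ n ih =>
        rw [hpwsucc, ← hassoc u hu (pw n) (hpwmem n) r hr, ih, hmur]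
    have hmq_pw : ∀ n, m q (pw n) = u := by
      intro n; induction n with
      | zero => exact hmqr
      | succ n ih =>
        rw [hpwsucc, ← hassoc q hq (pw n) (hpwmem n) r hr, ih, hmur]
    have hpwadd : ∀ a b, m (pw a) (pw b) = pw (a + b + 1) := by
      intro a b; induction b with
      | zero => rfl
      | succ b ih =>
        rw [hpwsucc, ← hassoc (pw a) (hpwmem a) (pw b) (hpwmem b) r hr, ih]
        rfl
    -- limit of powers
    set e : ℝ := ⨅ n, pw n with hedef
    have hbdd : BddBelow (Set.range pw) := ⟨0, fun x ⟨n, hn⟩ => hn ▸ (hpwmem n).1⟩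
    have htend : Tendsto pw atTop (𝓝 e) := tendsto_atTop_ciInf hpwanti hbdd
    have heI : e ∈ Set.Icc (0:ℝ) 1 := by
      constructor
      · exact le_ciInf fun n => (hpwmem n).1
      · exact le_trans (ciInf_le hbdd 0) hr.2
    -- limits: m u e = u, m q e = u, m e e = e
    have hconv : ∀ c ∈ Set.Icc (0:ℝ) 1,
        Tendsto (fun n => m c (pw n)) atTop (𝓝 (m c e)) := by
      intro c hc
      have hcw : ContinuousWithinAt (fun t : ℝ × ℝ => m t.1 t.2)
          (Set.Icc (0:ℝ) 1 ×ˢ Set.Icc (0:ℝ) 1) (c, e) := hcont (c, e) ⟨hc, heI⟩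
      have htendp : Tendsto (fun n => ((c:ℝ), pw n)) atTop
          (𝓝[Set.Icc (0:ℝ) 1 ×ˢ Set.Icc (0:ℝ) 1] (c, e)) := by
        apply tendsto_nhdsWithin_of_tendsto_nhds_of_eventually_within
        · exact (tendsto_const_nhds.prodMk_nhds htend)
        · exact Eventually.of_forall fun n => Set.mk_mem_prod hc (hpwmem n)
      exact hcw.tendsto.comp htendp
    have hmue : m u e = u :=
      tendsto_nhds_unique ((hconv u hu).congr fun n => (hmu_pw n)) tendsto_const_nhds
    have hmqe : m q e = u :=
      tendsto_nhds_unique ((hconv q hq).congr fun n => (hmq_pw n)) tendsto_const_nhds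
    have hmee : m e e = e := by
      have hcw : ContinuousWithinAt (fun t : ℝ × ℝ => m t.1 t.2)
          (Set.Icc (0:ℝ) 1 ×ˢ Set.Icc (0:ℝ) 1) (e, e) := hcont (e, e) ⟨heI, heI⟩
      have htendp : Tendsto (fun n => (pw n, pw n)) atTop
          (𝓝[Set.Icc (0:ℝ) 1 ×ˢ Set.Icc (0:ℝ) 1] (e, e)) := by
        apply tendsto_nhdsWithin_of_tendsto_nhds_of_eventually_within
        · exact (htend.prodMk_nhds htend)
        · exact Eventually.of_forall fun n => Set.mk_mem_prod (hpwmem n) (hpwmem n)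
      have hA : Tendsto (fun n => m (pw n) (pw n)) atTop (𝓝 (m e e)) :=
        hcw.tendsto.comp htendp
      have hB : Tendsto (fun n => m (pw n) (pw n)) atTop (𝓝 e) := by
        have : (fun n => m (pw n) (pw n)) = fun n => pw (n + n + 1) := by
          funext n; exact hpwadd n n
        rw [this]
        have hmono' : Tendsto (fun n : ℕ => n + n + 1) atTop atTop :=
          Filter.tendsto_atTop_atTop.mpr (fun b => ⟨b, fun n hn => by omega⟩)
        exact htend.comp hmono'
      exact tendsto_nhds_unique hA hB
    -- u ≤ e
    have hue : u ≤ e := by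
      calc u = m u e := hmue.symm
        _ ≤ e := hle_right u hu e heI
    -- case on e vs q
    rcases le_or_gt e q with hqe | hqe
    · -- e ≤ q : m q e ≥ m e e = e
      have : e ≤ m q e := by
        calc e = m e e := hmee.symm
        _ ≤ m q e := hmono e heI q hq e heI e heI hqe le_rfl
      have heu : e = u := le_antisymm (hmqe ▸ this) hue
      rw [← heu]; exact hmee
    · -- q < e : contradiction via IVT
      exfalso
      have hconte : ContinuousOn (fun t => m e t) (Set.Icc (0:ℝ) 1) := by
        have hmapsto : Set.MapsTo (fun t : ℝ => ((e:ℝ), t)) (Set.Icc (0:ℝ) 1)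
            (Set.Icc (0:ℝ) 1 ×ˢ Set.Icc (0:ℝ) 1) := fun t ht => Set.mk_mem_prod heI ht
        exact hcont.comp (continuousOn_const.prodMk continuousOn_id) hmapsto
      have he0 : m e 0 = 0 :=
        le_antisymm (hle_right e heI 0 h0) (hmem e heI 0 h0).1
      have he1 : m e 1 = e := hunit e heI
      have hiv : Set.Icc (m e 0) (m e 1) ⊆ (fun t => m e t) '' Set.Icc (0:ℝ) 1 :=
        intermediate_value_Icc zero_le_one hconte
      have hq' : q ∈ Set.Icc (m e 0) (m e 1) := by
        rw [he0, he1]; exact ⟨hq.1, le_of_lt hqe⟩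
      obtain ⟨t, ht, hmt⟩ := hiv hq'
      have hmt' : m e t = q := hmt
      -- m q e = m (m e t) e = m t (m e e) = m t e = q
      have : m q e = q := by
        calc m q e = m (m e t) e := by rw [hmt']
          _ = m (m t e) e := by rw [hcomm e heI t ht]
          _ = m t (m e e) := hassoc t ht e heI e heI
          _ = m t e := by rw [hmee]
          _ = m e t := hcomm t ht e heI
          _ = q := hmt'
      rw [hmqe] at this
      exact absurd this (ne_of_lt hlt)
  · -- reverse direction
    rintro (heq | ⟨hlt, hidem⟩)
    · -- p = q : take u = p
      subst heq
      refine ⟨p, hp, by simp, ?_, ?_, ?_⟩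
      · have h1' : m (rr p p) p ≤ p := hle_right (rr p p) (hrmem p hp p hp) p hp
        calc m (m (rr p p) p) (rr p p) ≤ m p (rr p p) :=
              hmono _ (hmem _ (hrmem p hp p hp) p hp) p hp _ (hrmem p hp p hp) _
                (hrmem p hp p hp) h1' le_rfl
        _ ≤ p := hres p hp p hp
      · exact hres p hp p hp
      · -- p ≤ m p (rr p p) since rr p p = 1
        have hr1 : rr p p = 1 := by
          refine le_antisymm (hrmem p hp p hp).2 ?_
          exact (hadj p hp 1 h1 p hp).mp (le_of_eq (hunit p hp))
        rw [hr1, hunit p hp]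
    · -- p < q, m p p = p : take u = p
      refine ⟨p, hp, le_min le_rfl (le_of_lt hlt), ?_, ?_, ?_⟩
      · have h1' : m (rr q q) p ≤ p := hle_right (rr q q) (hrmem q hq q hq) p hp
        calc m (m (rr q q) p) (rr p p) ≤ m p (rr p p) :=
              hmono _ (hmem _ (hrmem q hq q hq) p hp) p hp _ (hrmem p hp p hp) _
                (hrmem p hp p hp) h1' le_rfl
        _ ≤ p := hres p hp p hp
      · exact le_trans (hres p hp p hp) (le_of_lt hlt)
      · -- p ≤ m p (rr q p) since p ≤ rr q p and m p p = p
        have hpr : p ≤ rr q p := hler q hq p hp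
        calc p = m p p := hidem.symm
        _ ≤ m p (rr q p) := hmono p hp p hp p hp _ (hrmem q hq p hp) le_rfl hpr
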